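/- Let $(e_k)_{k\ge1}$ be a sequence of nonnegative reals satisfying $e_{k+1} \le (1 - 2\alpha_k c) e_k + \alpha_k^2 G^2$ for all $k \ge 1$, where $c, G > 0$, $\alpha_k = \frac{2k+1}{2c(k+1)^2}$. Then for all $k \ge 1$, $e_{k+1} \le \frac{e_1}{(k+1)^2} + \frac{G^2}{c^2(k+1)}$. -/

import Mathlib

theorem stmt7 (e : ℕ → ℝ) (c G : ℝ) (hc : 0 < c) (hG : 0 < G) (he : ∀ k, 0 ≤ e k)
    (hrec : ∀ k, 1 ≤ k → e (k+1) ≤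
      (1 - 2*((2*(k:ℝ)+1)/(2*c*((k:ℝ)+1)^2))*c) * e k
      + ((2*(k:ℝ)+1)/(2*c*((k:ℝ)+1)^2))^2 * G^2) :
    ∀ k, 1 ≤ k → e (k+1) ≤ e 1/((k:ℝ)+1)^2 + G^2/(c^2*((k:ℝ)+1)) := by
  have hc' : c ≠ 0 := ne_of_gt hc
  have key : ∀ n : ℕ, 1 ≤ n → ((n:ℝ)+1)^2 * e (n+1) ≤ e 1 + (n:ℝ) * (G^2/c^2) := by
    intro n hn
    induction n, hn using Nat.le_induction with
    | base =>
      have h := hrec 1 le_rfl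
      have hcoef : (1 - 2*((2*(1:ℝ)+1)/(2*c*((1:ℝ)+1)^2))*c) = 1/4 := by
        field_simp; ring
      have hstep : ((2*(1:ℝ)+1)/(2*c*((1:ℝ)+1)^2))^2 = 9/(64*c^2) := by
        field_simp; ring
      push_cast at h ⊢
      rw [hcoef, hstep] at h
      have h1 := he 1
      have hGc : 0 < G^2/c^2 := by positivity
      have : 9/(64*c^2)*G^2 ≤ (1/4) * (G^2/c^2) := by
        have h4 : (1/4) * (G^2/c^2) = 16/(64*c^2)*G^2 := by ring
        rw [h4]
        gcongr
        norm_num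
      nlinarith
    | succ n hn ih =>
      have h := hrec (n+1) (by omega)
      set N := (n:ℝ) with hN
      have hN0 : 0 ≤ N := Nat.cast_nonneg n
      have h2 : (N+2) ≠ 0 := by positivity
      push_cast at h ⊢
      have hcoef : (1 - 2*((2*(N+1)+1)/(2*c*((N+1)+1)^2))*c) = (N+1)^2/(N+2)^2 := by
        field_simp; ring
      have hstep : ((2*(N+1)+1)/(2*c*((N+1)+1)^2))^2 = (2*N+3)^2/(4*c^2*(N+2)^4) := by
        field_simp; ring
      rw [hcoef, hstep] at h
      have hterm : (2*N+3)^2/(4*c^2*(N+2)^2)*G^2 ≤ G^2/c^2 := by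
        rw [div_mul_eq_mul_div, div_le_div_iff₀ (by positivity) (by positivity)]
        nlinarith [sq_nonneg G, sq_nonneg c, mul_pos hc hc, sq_nonneg (G*c)]
      calc (N+1+1)^2 * e (n+1+1)
          ≤ (N+1+1)^2 * ((N+1)^2/(N+2)^2 * e (n+1) + (2*N+3)^2/(4*c^2*(N+2)^4) * G^2) := by
            apply mul_le_mul_of_nonneg_left _ (by positivity)
            convert h using 3 <;> ring
        _ = (N+1)^2 * e (n+1) + (2*N+3)^2/(4*c^2*(N+2)^2)*G^2 := by
            field_simp; ring
        _ ≤ (e 1 + N*(G^2/c^2)) + G^2/c^2 := add_le_add ih hterm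
        _ = e 1 + (N+1)*(G^2/c^2) := by ring
  intro k hk
  have hK := key k hk
  set K := (k:ℝ) with hKdef
  have hK0 : 0 ≤ K := Nat.cast_nonneg k
  have h1 : (0:ℝ) < (K+1)^2 := by positivity
  rw [← mul_le_mul_iff_right₀ h1]
  have heq : (K+1)^2 * (e 1/(K+1)^2 + G^2/(c^2*(K+1))) = e 1 + (K+1)*(G^2/c^2) := by
    field_simp
  rw [heq]
  have hGc : 0 ≤ G^2/c^2 := by positivity
  nlinarith
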